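/- Fix 0 < a < b, initial price P > 0 and final price P' > 0. Define the holding value v_h(P,P') = P'·(V³(1,a,b,P))₁ + (V³(1,a,b,P))₂ and the purchase value vₚ(P') = P'·(V³(1,a,b,P'))₁ + (V³(1,a,b,P'))₂. Then v_h(P,P') ≥ vₚ(P'), i.e., the impermanent loss v_h(P,P') − vₚ(P') is nonnegative. -/

import Mathlib

set_option maxHeartbeats 800000


/-- The v3 bundle value of L units of [a,b]-liquidity at price P. -/
noncomputable def V3 (L a b P : ℝ) : ℝ × ℝ :=
  if P < a then (L * (1 / Real.sqrt a - 1 / Real.sqrt b), 0)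
  else if b < P then (0, L * (Real.sqrt b - Real.sqrt a))
  else (L * (1 / Real.sqrt P - 1 / Real.sqrt b), L * (Real.sqrt P - Real.sqrt a))

/-- The v3 impermanent loss is nonnegative: holding value ≥ purchase value. -/
theorem v3_impermanent_loss_nonneg (a b P P' : ℝ)
    (ha : 0 < a) (hab : a < b) (hP : 0 < P) (hP' : 0 < P') :
    P' * (V3 1 a b P').1 + (V3 1 a b P').2 ≤ P' * (V3 1 a b P).1 + (V3 1 a b P).2 := by
  have hb : 0 < b := ha.trans hab
  have hsa0 : 0 < Real.sqrt a := Real.sqrt_pos.2 ha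
  have hsb0 : 0 < Real.sqrt b := Real.sqrt_pos.2 hb
  have hsP0 : 0 < Real.sqrt P := Real.sqrt_pos.2 hP
  have hsP'0 : 0 < Real.sqrt P' := Real.sqrt_pos.2 hP'
  have hsa2 : Real.sqrt a ^ 2 = a := Real.sq_sqrt ha.le
  have hsb2 : Real.sqrt b ^ 2 = b := Real.sq_sqrt hb.le
  have hsP2 : Real.sqrt P ^ 2 = P := Real.sq_sqrt hP.le
  have hsP'2 : Real.sqrt P' ^ 2 = P' := Real.sq_sqrt hP'.le
  have hab' : Real.sqrt a < Real.sqrt b := Real.sqrt_lt_sqrt ha.le hab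
  unfold V3
  split_ifs <;> simp only [one_mul, add_zero, zero_add] <;> field_simp
  · exact le_refl _
  · -- P' < a, b < P
    rename_i h1 _ _
    nlinarith [mul_pos (sub_pos.2 hab')
      (sub_pos.2 (show P' < Real.sqrt a * Real.sqrt b by nlinarith))]
  · -- P' < a, mid P
    rename_i h1 h2 _
    have hsP : Real.sqrt a ≤ Real.sqrt P := Real.sqrt_le_sqrt (not_lt.1 h2)
    nlinarith [mul_nonneg (mul_nonneg (sub_nonneg.2 hsP) hsb0.le)
      (sub_pos.2 (show P' < Real.sqrt a * Real.sqrt P by nlinarith)).le]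
  · -- b < P', P < a
    rename_i _ h2 _
    nlinarith [mul_pos (sub_pos.2 hab')
      (sub_pos.2 (show Real.sqrt a * Real.sqrt b < P' by nlinarith))]
  · exact le_refl _
  · -- b < P', mid P
    rename_i _ h2 _ h4
    have hsP : Real.sqrt P ≤ Real.sqrt b := Real.sqrt_le_sqrt (not_lt.1 h4)
    nlinarith [mul_nonneg (sub_nonneg.2 hsP)
      (sub_pos.2 (show Real.sqrt P * Real.sqrt b < P' by nlinarith)).le]
  · -- mid P', P < a
    have e1 : Real.sqrt P' ^ 2 * (Real.sqrt b * Real.sqrt b * Real.sqrt P')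
        = P' * (Real.sqrt b * Real.sqrt b * Real.sqrt P') := by rw [hsP'2]
    have e2 : Real.sqrt P' ^ 2 * (Real.sqrt b * Real.sqrt b * Real.sqrt a)
        = P' * (Real.sqrt b * Real.sqrt b * Real.sqrt a) := by rw [hsP'2]
    nlinarith [mul_nonneg (mul_nonneg (mul_pos hsb0 hsb0).le
      (sq_nonneg (Real.sqrt P' - Real.sqrt a))) hsP'0.le, e1, e2]
  · -- mid P', b < P
    nlinarith [mul_nonneg (sq_nonneg (Real.sqrt P' - Real.sqrt b)) hsP'0.le]
  · -- mid P', mid P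
    have e1 : Real.sqrt P' ^ 2 * (Real.sqrt b * Real.sqrt b * Real.sqrt P')
        = P' * (Real.sqrt b * Real.sqrt b * Real.sqrt P') := by rw [hsP'2]
    have e2 : Real.sqrt P' ^ 2 * (Real.sqrt b * Real.sqrt b * Real.sqrt P)
        = P' * (Real.sqrt b * Real.sqrt b * Real.sqrt P) := by rw [hsP'2]
    nlinarith [mul_nonneg (mul_nonneg (mul_pos hsb0 hsb0).le
      (sq_nonneg (Real.sqrt P' - Real.sqrt P))) hsP'0.le, e1, e2]
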